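/- arXiv:1504.05947 — 3 statements merged into one kernel-verified Lean document; each statement's English description precedes it below -/
import Mathlib

section
/- Let D be an atomic Boolean algebra and let A be a subalgebra of D that is complete in D (i.e., whenever a subset S of A has a supremum in A, that supremum equals the supremum of S computed in D). Then A is atomic. -/
variable {D : Type*} [BooleanAlgebra D]

/-- `A` is (the carrier of) a Boolean subalgebra of `D`. -/
def IsSubalgebra (A : Set D) : Prop :=
  ⊥ ∈ A ∧ ⊤ ∈ A ∧ (∀ x ∈ A, ∀ y ∈ A, x ⊔ y ∈ A) ∧
    (∀ x ∈ A, ∀ y ∈ A, x ⊓ y ∈ A) ∧ (∀ x ∈ A, xᶜ ∈ A)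

/-- `A ⊆_c D`: every supremum existing in (the subposet) `A` is a supremum in `D`. -/
def IsCompleteSub (A : Set D) : Prop :=
  ∀ (S : Set D) (a : D), S ⊆ A → a ∈ A → a ∈ upperBounds S →
    (∀ u ∈ A, u ∈ upperBounds S → a ≤ u) → IsLUB S a

/-- `a` is an atom of the subalgebra with carrier `A`. -/
def IsAtomIn (A : Set D) (a : D) : Prop :=
  a ∈ A ∧ a ≠ ⊥ ∧ ∀ b ∈ A, b ≠ ⊥ → b ≤ a → b = a

/-- If `D` is an atomic Boolean algebra and `A ⊆_c D` is a complete subalgebra,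
then `A` is atomic. -/
theorem complete_subalgebra_of_atomic_is_atomic
    (hD : IsAtomic D) (A : Set D) (hA : IsSubalgebra A) (hc : IsCompleteSub A) :
    ∀ a ∈ A, a ≠ ⊥ → ∃ b, IsAtomIn A b ∧ b ≤ a := by
  intro a haA ha
  by_contra h
  push_neg at h
  obtain ⟨hbot, htop, hsup, hinf, hcomp⟩ := hA
  -- pick an atom d of D below a
  obtain ⟨d, hd, hda⟩ := (hD.eq_bot_or_exists_atom_le a).resolve_left ha
  -- atom dichotomy
  have atomcase : ∀ x : D, d ⊓ x = ⊥ ∨ d ≤ x := by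
    intro x
    rcases (inf_le_left : d ⊓ x ≤ d).lt_or_eq with hlt | heq
    · exact Or.inl (hd.2 _ hlt)
    · exact Or.inr (heq ▸ inf_le_right)
  set S : Set D := {x | x ∈ A ∧ x ≤ a ∧ x ⊓ d = ⊥} with hS
  have hSA : S ⊆ A := fun x hx => hx.1
  have hub : a ∈ upperBounds S := fun x hx => hx.2.1
  have hleast : ∀ u ∈ A, u ∈ upperBounds S → a ≤ u := by
    intro u huA hu
    set c := a ⊓ uᶜ with hcdef
    have hcA : c ∈ A := hinf a haA uᶜ (hcomp u huA)
    have hca : c ≤ a := inf_le_left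
    have hcu : c ≤ uᶜ := inf_le_right
    -- key: any nonzero element of A below a and disjoint from d leads to contradiction
    have key : ∀ x : D, x ∈ A → x ≤ a → x ≤ uᶜ → x ⊓ d = ⊥ → x = ⊥ := by
      intro x hxA hxa hxu hxd
      have : x ≤ u := hu ⟨hxA, hxa, hxd⟩
      have : x ≤ u ⊓ uᶜ := le_inf this hxu
      simpa using this
    have hcbot : c = ⊥ := by
      by_contra hcne
      rcases atomcase c with hdc | hdc
      · exact hcne (key c hcA hca hcu (inf_comm c d ▸ hdc))
      -- d ≤ c ; c is not an atom of A
      · have hnotatom : ¬ IsAtomIn A c := fun hat => h c hat hca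
        have : ∃ b ∈ A, b ≠ ⊥ ∧ b ≤ c ∧ b ≠ c := by
          by_contra hb
          push_neg at hb
          exact hnotatom ⟨hcA, hcne, fun b hbA hbne hbc => hb b hbA hbne hbc⟩
        obtain ⟨b, hbA, hbne, hbc, hbnec⟩ := this
        set c' := c ⊓ bᶜ with hc'def
        have hc'A : c' ∈ A := hinf c hcA bᶜ (hcomp b hbA)
        have hc'ne : c' ≠ ⊥ := by
          intro hb0
          have h0 : c \ b = ⊥ := by rw [sdiff_eq]; exact hb0
          exact hbnec (le_antisymm hbc (sdiff_eq_bot_iff.mp h0))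
        rcases atomcase b with hdb | hdb
        · exact hbne (key b hbA (hbc.trans hca) (hbc.trans hcu) (inf_comm b d ▸ hdb))
        · have hdc' : c' ⊓ d = ⊥ := by
            have h1 : c' ⊓ d ≤ bᶜ := inf_le_left.trans inf_le_right
            have h2 : c' ⊓ d ≤ b := inf_le_right.trans hdb
            have : c' ⊓ d ≤ b ⊓ bᶜ := le_inf h2 h1
            simpa using le_bot_iff.mp (by simpa using this)
          exact hc'ne (key c' hc'A (inf_le_left.trans hca) (inf_le_left.trans hcu) hdc')
    have : a ⊓ uᶜ = ⊥ := hcbot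
    have : a \ u = ⊥ := by rwa [sdiff_eq]
    exact sdiff_eq_bot_iff.mp this
  have hlub : IsLUB S a := hc S a hSA haA hub hleast
  -- but a ⊓ dᶜ is an upper bound of S in D
  have hub' : a ⊓ dᶜ ∈ upperBounds S := by
    intro x hx
    exact le_inf hx.2.1 (le_compl_iff_disjoint_right.mpr (disjoint_iff.mpr hx.2.2))
  have hle : a ≤ a ⊓ dᶜ := hlub.2 hub'
  have : d ≤ dᶜ := hda.trans (hle.trans inf_le_right)
  have : d = ⊥ := by simpa using le_inf le_rfl this
  exact hd.1 this
end

section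
/- Let ω ≤ α < β, B a cylindric algebra of dimension β, D = Nr_α B its α-neat reduct, S ⊆ D with sup_D S = 1, and suppose d ∈ B satisfies s ≤ d for all s ∈ S. Then setting J = Δd \ α (a finite set, assuming B is dimension-complemented so that Δd \ α is finite) and t = −c_{(J)}(−d), the element t belongs to D, s ≤ t for all s ∈ S, and t = 1 implies d = 1. Consequently Nr_α B is a complete subalgebra of B: sup_D S = 1 implies sup_B S = 1. -/
variable {B : Type*} [BooleanAlgebra B] {I : Type*}

/-- The carrier of the neat reduct `Nr_α B`: elements fixed by all cylindrifiers with
index outside `J0` (which plays the role of `α ⊆ β`). -/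
def NrSet (c : I → B → B) (J0 : Set I) : Set B := {x : B | ∀ i ∉ J0, c i x = x}

/-- `cList c L x` is the composition `c_{(J)} x` of the cylindrifiers indexed by the
list `L` applied to `x`. -/
def cList (c : I → B → B) (L : List I) (x : B) : B := L.foldr (fun i y => c i y) x

set_option linter.unusedSectionVars false


section helpers

variable (c : I → B → B)
variable (ax1 : ∀ i, c i ⊥ = ⊥)
variable (ax2 : ∀ i (x : B), x ≤ c i x)
variable (ax3 : ∀ i (x y : B), c i (x ⊓ c i y) = c i x ⊓ c i y)
variable (ax4 : ∀ i j (x : B), c i (c j x) = c j (c i x))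

include ax2 in
lemma ctop (i : I) : c i (⊤ : B) = ⊤ := top_le_iff.mp (ax2 i ⊤)

include ax2 ax3 in
lemma cidem (i : I) (x : B) : c i (c i x) = c i x := by
  have h := ax3 i ⊤ x
  simpa [ctop c ax2 i] using h

include ax2 ax3 in
lemma cmono (i : I) {x y : B} (h : x ≤ y) : c i x ≤ c i y := by
  have hx : x = x ⊓ c i y := le_antisymm (le_inf le_rfl (h.trans (ax2 i y))) inf_le_left
  calc c i x = c i (x ⊓ c i y) := by rw [← hx]
    _ = c i x ⊓ c i y := ax3 i x y
    _ ≤ c i y := inf_le_right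

include ax1 ax2 ax3 in
lemma ccompl (i : I) {x : B} (h : c i x = x) : c i xᶜ = xᶜ := by
  have h2 : c i (xᶜ ⊓ c i x) = c i xᶜ ⊓ c i x := ax3 i xᶜ x
  rw [h] at h2
  simp only [compl_inf_eq_bot] at h2
  rw [ax1 i] at h2
  exact le_antisymm (le_compl_iff_disjoint_right.mpr (disjoint_iff.mpr h2.symm)) (ax2 i xᶜ)

include ax2 ax3 ax4 in
lemma cList_fixed_of_mem {i : I} {L : List I} (hmem : i ∈ L) (x : B) :
    c i (cList c L x) = cList c L x := by
  induction L with
  | nil => simp at hmem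
  | cons j L ih =>
    rcases List.mem_cons.mp hmem with rfl | hmem'
    · exact cidem c ax2 ax3 i (cList c L x)
    · show c i (c j (cList c L x)) = c j (cList c L x)
      rw [ax4 i j, ih hmem']

include ax4 in
lemma cList_fixed_of_fixed {i : I} {L : List I} {x : B} (h : c i x = x) :
    c i (cList c L x) = cList c L x := by
  induction L with
  | nil => exact h
  | cons j L ih =>
    show c i (c j (cList c L x)) = c j (cList c L x)
    rw [ax4 i j, ih]

include ax2 ax3 in
lemma cList_le_of_fixed {L : List I} {x y : B} (hxy : x ≤ y)
    (hfix : ∀ i ∈ L, c i y = y) : cList c L x ≤ y := by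
  induction L with
  | nil => exact hxy
  | cons j L ih =>
    have h1 : cList c L x ≤ y := ih fun i hi => hfix i (List.mem_cons_of_mem j hi)
    have := cmono c ax2 ax3 j h1
    rw [hfix j (List.mem_cons_self (a := j) (l := L))] at this
    exact this

include ax2 in
lemma le_cList (L : List I) (x : B) : x ≤ cList c L x := by
  induction L with
  | nil => exact le_rfl
  | cons j L ih => exact ih.trans (ax2 j (cList c L x))

include ax1 ax2 ax3 ax4 in
lemma key (J0 : Set I)
    (S : Set B) (hS : S ⊆ NrSet c J0)
    (e : B) (he : ∀ s ∈ S, s ≤ e)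
    (L : List I) (hL : ∀ i : I, i ∈ L ↔ (c i e ≠ e ∧ i ∉ J0)) :
    (cList c L eᶜ)ᶜ ∈ NrSet c J0 ∧
    (∀ s ∈ S, s ≤ (cList c L eᶜ)ᶜ) ∧
    ((cList c L eᶜ)ᶜ = ⊤ → e = ⊤) := by
  refine ⟨?_, ?_, ?_⟩
  · intro i hi
    have hfix : c i (cList c L eᶜ) = cList c L eᶜ := by
      by_cases hmem : i ∈ L
      · exact cList_fixed_of_mem c ax2 ax3 ax4 hmem eᶜ
      · have hce : c i e = e := by
          by_contra hne
          exact hmem ((hL i).mpr ⟨hne, hi⟩)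
        exact cList_fixed_of_fixed c ax4 (ccompl c ax1 ax2 ax3 i hce)
    exact ccompl c ax1 ax2 ax3 i hfix
  · intro s hs
    rw [le_compl_iff_disjoint_right, disjoint_comm, ← le_compl_iff_disjoint_right]
    refine cList_le_of_fixed c ax2 ax3 (compl_le_compl (he s hs)) ?_
    intro i hiL
    exact ccompl c ax1 ax2 ax3 i (hS hs i ((hL i).mp hiL).2)
  · intro ht
    have : cList c L eᶜ = ⊥ := by
      have := congrArg compl ht
      simpa using this
    have h2 : eᶜ ≤ ⊥ := this ▸ le_cList c ax2 L eᶜ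
    have : eᶜ = ⊥ := le_bot_iff.mp h2
    simpa using congrArg compl this

end helpers

/-- Let `ω ≤ α < β`, `B ∈ CA_β` dimension-complemented, `D = Nr_α B`, `S ⊆ D` with
`sup_D S = ⊤`, and `e ∈ B` an upper bound of `S`. With `J = Δe \ α` (finite) and
`t = −c_{(J)}(−e)`: `t ∈ D`, `s ≤ t` for all `s ∈ S`, and `t = ⊤` implies `e = ⊤`.
Consequently `Nr_α B ⊆_c B`: `sup_D S = ⊤` implies `sup_B S = ⊤`. -/
theorem neat_reduct_complete_subalgebra
    (c : I → B → B) (d : I → I → B)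
    (ax1 : ∀ i, c i ⊥ = ⊥)
    (ax2 : ∀ i (x : B), x ≤ c i x)
    (ax3 : ∀ i (x y : B), c i (x ⊓ c i y) = c i x ⊓ c i y)
    (ax4 : ∀ i j (x : B), c i (c j x) = c j (c i x))
    (ax5 : ∀ i, d i i = ⊤)
    (ax6 : ∀ i j k, k ≠ i → k ≠ j → d i j = c k (d i k ⊓ d k j))
    (J0 : Set I) (hJ0 : J0.Infinite)  -- ω ≤ α
    -- B is dimension complemented: β \ Δx is infinite for every x
    (hdc : ∀ x : B, {i : I | c i x ≠ x}ᶜ.Infinite)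
    -- so that Δx \ α is finite for every x
    (hfin : ∀ x : B, ({i : I | c i x ≠ x} \ J0).Finite)
    (S : Set B) (hS : S ⊆ NrSet c J0)
    -- sup_D S = ⊤ :
    (hsup : ∀ u ∈ NrSet c J0, u ∈ upperBounds S → ⊤ ≤ u)
    (e : B) (he : ∀ s ∈ S, s ≤ e)
    (L : List I) (hL : ∀ i : I, i ∈ L ↔ (c i e ≠ e ∧ i ∉ J0)) :
    (cList c L eᶜ)ᶜ ∈ NrSet c J0 ∧
    (∀ s ∈ S, s ≤ (cList c L eᶜ)ᶜ) ∧
    ((cList c L eᶜ)ᶜ = ⊤ → e = ⊤) ∧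
    IsLUB S ⊤ := by
  obtain ⟨h1, h2, h3⟩ := key c ax1 ax2 ax3 ax4 J0 S hS e he L hL
  refine ⟨h1, h2, h3, fun s _ => le_top, ?_⟩
  intro u hu
  set L' := ((hfin u).toFinset).toList with hL'def
  have hL' : ∀ i : I, i ∈ L' ↔ (c i u ≠ u ∧ i ∉ J0) := by
    intro i
    rw [hL'def, Finset.mem_toList, Set.Finite.mem_toFinset, Set.mem_diff, Set.mem_setOf_eq]
  obtain ⟨k1, k2, k3⟩ := key c ax1 ax2 ax3 ax4 J0 S hS u (fun s hs => hu hs) L' hL'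
  have : ⊤ ≤ (cList c L' uᶜ)ᶜ := hsup _ k1 k2
  exact (k3 (top_le_iff.mp this)).ge
end

section
/- Let β be a regular cardinal, B a cylindric-like Boolean algebra with operators of dimension β such that every element x has dimension set Δx of cardinality < β, with substitution operators s^k_l satisfying s^k_l x ≤ c_k x, and such that c_l x = x and c_l y = y with s^k_l x ≤ y imply c_k x ≤ y. Then for every k < β and x ∈ B, the supremum of {s^k_l x : l < β} exists in B and equals c_k x. -/
universe u

/-- If the dimension `β` is a regular cardinal, every element has dimension set of
cardinality `< β`, and the substitution operators satisfy `s^k_l x ≤ c_k x` together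
with the key bounding property, then `c_k x = sup_{l < β} s^k_l x` for all `k, x`. -/
theorem cyl_is_sup_of_substitutions
    {B : Type u} [BooleanAlgebra B] {I : Type u}
    (hreg : (Cardinal.mk I).IsRegular)
    (c : I → B → B) (s : I → I → B → B)
    (hdim : ∀ x : B, Cardinal.mk {i : I // c i x ≠ x} < Cardinal.mk I)
    (h1 : ∀ k l (x : B), s k l x ≤ c k x)
    (h2 : ∀ k l (x y : B), c l x = x → c l y = y → s k l x ≤ y → c k x ≤ y) :
    ∀ k (x : B), IsLUB (Set.range fun l => s k l x) (c k x) := by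
  intro k x
  constructor
  · rintro _ ⟨l, rfl⟩
    exact h1 k l x
  · intro y hy
    -- find l with c l x = x and c l y = y
    have hx := hdim x
    have hyd := hdim y
    have hU : Cardinal.mk ↥({i : I | c i x ≠ x} ∪ {i : I | c i y ≠ y}) < Cardinal.mk I := by
      refine lt_of_le_of_lt (Cardinal.mk_union_le _ _) ?_
      exact Cardinal.add_lt_of_lt hreg.aleph0_le hx hyd
    have : ∃ l, l ∉ ({i : I | c i x ≠ x} ∪ {i : I | c i y ≠ y}) := by
      by_contra h
      push_neg at h
      have : ({i : I | c i x ≠ x} ∪ {i : I | c i y ≠ y}) = Set.univ :=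
        Set.eq_univ_of_forall h
      rw [this, Cardinal.mk_univ] at hU
      exact lt_irrefl _ hU
    obtain ⟨l, hl⟩ := this
    simp only [Set.mem_union, Set.mem_setOf_eq, not_or, not_not] at hl
    exact h2 k l x y hl.1 hl.2 (hy ⟨l, rfl⟩)
end
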